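/- Suppose (p₁,…,pₙ) ∈ [0,1]^n maximizes G(p) = ∑_i ρ_i ln p_i + ∫₀¹ (∏_j(1−p_j x) − 1)/x dx over (0,1]^n, where all ρ_i > 0. Then ∑_i ρ_i ≥ 1 − ∏_i (1 − p_i). In particular, if ∑_i ρ_i < 1, then p_i < 1 for all i at the maximizer. -/

import Mathlib

open Finset MeasureTheory

lemma tele_ineq' {ι : Type*} [DecidableEq ι] (s : Finset ι) (a b : ι → ℝ)
    (hb : ∀ j ∈ s, 0 ≤ b j) (hab : ∀ j ∈ s, b j ≤ a j) (ha : ∀ j ∈ s, a j ≤ 1) :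
    ∑ i ∈ s, (a i - b i) * ∏ j ∈ s.erase i, b j ≤ ∏ i ∈ s, a i - ∏ i ∈ s, b i := by
  induction s using Finset.induction_on with
  | empty => simp
  | @insert i s hi ih =>
    have hb' : ∀ j ∈ s, 0 ≤ b j := fun j hj => hb j (mem_insert_of_mem hj)
    have hab' : ∀ j ∈ s, b j ≤ a j := fun j hj => hab j (mem_insert_of_mem hj)
    have ha' : ∀ j ∈ s, a j ≤ 1 := fun j hj => ha j (mem_insert_of_mem hj)
    have ihs := ih hb' hab' ha'
    have hprodle : ∏ j ∈ s, b j ≤ ∏ j ∈ s, a j := Finset.prod_le_prod hb' hab'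
    have hbi : 0 ≤ b i := hb i (mem_insert_self i s)
    have habi : b i ≤ a i := hab i (mem_insert_self i s)
    rw [Finset.sum_insert hi, Finset.prod_insert hi, Finset.prod_insert hi,
      Finset.erase_insert hi]
    have hsum : ∑ j ∈ s, (a j - b j) * ∏ k ∈ (insert i s).erase j, b k
        = b i * ∑ j ∈ s, (a j - b j) * ∏ k ∈ s.erase j, b k := by
      rw [Finset.mul_sum]
      refine Finset.sum_congr rfl fun j hj => ?_
      have hji : j ≠ i := by rintro rfl; exact hi hj
      rw [Finset.erase_insert_of_ne hji.symm,
        Finset.prod_insert (fun h => hi (Finset.mem_of_mem_erase h))]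
      ring
    rw [hsum]
    nlinarith [mul_le_mul_of_nonneg_left ihs hbi,
      mul_le_mul_of_nonneg_right hprodle (sub_nonneg.2 habi)]


lemma one_sub_prod_le' {ι : Type*} (s : Finset ι) (b : ι → ℝ)
    (hb0 : ∀ j ∈ s, 0 ≤ b j) (hb1 : ∀ j ∈ s, b j ≤ 1) :
    1 - ∏ j ∈ s, b j ≤ ∑ j ∈ s, (1 - b j) := by
  classical
  induction s using Finset.induction_on with
  | empty => simp
  | @insert i s hi ih =>
    have hb0' : ∀ j ∈ s, 0 ≤ b j := fun j hj => hb0 j (mem_insert_of_mem hj)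
    have hb1' : ∀ j ∈ s, b j ≤ 1 := fun j hj => hb1 j (mem_insert_of_mem hj)
    have ihs := ih hb0' hb1'
    have hple : ∏ j ∈ s, b j ≤ 1 := Finset.prod_le_one hb0' hb1'
    have hpn : 0 ≤ ∏ j ∈ s, b j := Finset.prod_nonneg hb0'
    rw [Finset.sum_insert hi, Finset.prod_insert hi]
    have hbi0 := hb0 i (mem_insert_self i s)
    have hbi1 := hb1 i (mem_insert_self i s)
    nlinarith

lemma intble' (n : ℕ) (q : Fin n → ℝ) (hq0 : ∀ i, 0 ≤ q i) (hq1 : ∀ i, q i ≤ 1) :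
    IntegrableOn (fun x => ((∏ j, (1 - q j * x)) - 1) / x) (Set.Ioo (0:ℝ) 1) volume := by
  have hcont : Continuous (fun x : ℝ => (∏ j, (1 - q j * x)) - 1) := by
    apply Continuous.sub _ continuous_const
    exact continuous_finset_prod _ fun j _ => by continuity
  have hmeas : AEStronglyMeasurable (fun x => ((∏ j, (1 - q j * x)) - 1) / x)
      (volume.restrict (Set.Ioo (0:ℝ) 1)) := by
    apply ContinuousOn.aestronglyMeasurable _ measurableSet_Ioo
    exact ContinuousOn.div hcont.continuousOn continuousOn_id
      (fun x hx => ne_of_gt hx.1)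
  refine Integrable.mono' (g := fun _ => ∑ j, q j)
    (integrableOn_const measure_Ioo_lt_top.ne) hmeas ?_
  filter_upwards [ae_restrict_mem measurableSet_Ioo] with x hx
  have hx0 := hx.1
  have hx1 := hx.2
  have hfac0 : ∀ j, 0 ≤ 1 - q j * x := fun j => by nlinarith [hq0 j, hq1 j]
  have hfac1 : ∀ j, 1 - q j * x ≤ 1 := fun j => by nlinarith [hq0 j]
  have hP0 : 0 ≤ ∏ j, (1 - q j * x) := Finset.prod_nonneg fun j _ => hfac0 j
  have hP1 : ∏ j, (1 - q j * x) ≤ 1 := Finset.prod_le_one (fun j _ => hfac0 j) (fun j _ => hfac1 j)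
  have hb := one_sub_prod_le' Finset.univ (fun j => 1 - q j * x)
      (fun j _ => hfac0 j) (fun j _ => hfac1 j)
  simp only [sub_sub_cancel] at hb
  rw [Real.norm_eq_abs, abs_div, abs_of_pos hx0,
    abs_of_nonpos (by linarith : (∏ j, (1 - q j * x)) - 1 ≤ 0)]
  rw [div_le_iff₀ hx0]
  calc -((∏ j, (1 - q j * x)) - 1) = 1 - ∏ j, (1 - q j * x) := by ring
    _ ≤ ∑ j, q j * x := hb
    _ = (∑ j, q j) * x := by rw [Finset.sum_mul]


lemma ftc' (n : ℕ) (p : Fin n → ℝ) :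
    ∫ x in Set.Ioo (0:ℝ) 1, (∑ i, p i * ∏ j ∈ Finset.univ.erase i, (1 - p j * x)) =
      1 - ∏ i, (1 - p i) := by
  have hderiv : ∀ x ∈ Set.uIcc (0:ℝ) 1,
      HasDerivAt (fun y => -(∏ j, (1 - p j * y)))
        (∑ i, p i * ∏ j ∈ Finset.univ.erase i, (1 - p j * x)) x := by
    intro x _
    have h1 : HasDerivAt (fun y => ∏ j, (1 - p j * y))
        (∑ i : Fin n, (∏ j ∈ Finset.univ.erase i, (1 - p j * x)) • (-(p i))) x :=
      HasDerivAt.fun_finsetProd (fun i _ => by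
        simpa using ((hasDerivAt_id x).const_mul (p i)).const_sub 1)
    have h2 := h1.fun_neg
    refine h2.congr_deriv ?_
    simp only [smul_eq_mul, mul_neg, ← Finset.sum_neg_distrib, neg_neg]
    exact Finset.sum_congr rfl fun i _ => by ring
  have hcont : Continuous (fun x : ℝ => ∑ i, p i * ∏ j ∈ Finset.univ.erase i, (1 - p j * x)) := by
    apply continuous_finset_sum
    intro i _
    exact Continuous.mul continuous_const (continuous_finset_prod _ fun j _ => by continuity)
  have := intervalIntegral.integral_eq_sub_of_hasDerivAt hderiv
    (hcont.intervalIntegrable 0 1)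
  rw [intervalIntegral.integral_of_le zero_le_one, integral_Ioc_eq_integral_Ioo] at this
  rw [this]
  simp
  ring

set_option maxHeartbeats 1000000 in
theorem stmt_18 (n : ℕ) (ρ : Fin n → ℝ) (hρ : ∀ i, 0 < ρ i)
    (p : Fin n → ℝ) (hp : ∀ i, p i ∈ Set.Ioc (0 : ℝ) 1)
    (G : (Fin n → ℝ) → ℝ)
    (hG : ∀ q, G q = ∑ i, ρ i * Real.log (q i) +
      ∫ x in Set.Ioo (0 : ℝ) 1, ((∏ j, (1 - q j * x)) - 1) / x)
    (hmax : ∀ q : Fin n → ℝ, (∀ i, q i ∈ Set.Ioc (0 : ℝ) 1) → G q ≤ G p) :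
    (1 - ∏ i, (1 - p i) ≤ ∑ i, ρ i) ∧
      (∑ i, ρ i < 1 → ∀ i, p i < 1) := by
  set S := ∑ i, ρ i with hS
  set P1 := ∏ i, (1 - p i) with hP1
  have hS0 : 0 ≤ S := Finset.sum_nonneg fun i _ => (hρ i).le
  have hp0 : ∀ i, 0 ≤ p i := fun i => (hp i).1.le
  have hp1 : ∀ i, p i ≤ 1 := fun i => (hp i).2
  -- the key inequality for each t ∈ (0,1)
  have key : ∀ t ∈ Set.Ioo (0:ℝ) 1, t * (1 - P1) ≤ S := by
    intro t ht
    set q : Fin n → ℝ := fun i => t * p i with hq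
    have hqmem : ∀ i, q i ∈ Set.Ioc (0:ℝ) 1 := fun i =>
      ⟨mul_pos ht.1 (hp i).1, by
        show t * p i ≤ 1
        nlinarith [(hp i).1, (hp i).2, ht.1, ht.2]⟩
    have hmax' := hmax q hqmem
    rw [hG q, hG p] at hmax'
    -- log part
    have hlogsum : ∑ i, ρ i * Real.log (q i)
        = S * Real.log t + ∑ i, ρ i * Real.log (p i) := by
      rw [hS, Finset.sum_mul, ← Finset.sum_add_distrib]
      refine Finset.sum_congr rfl fun i _ => ?_
      rw [hq]
      rw [Real.log_mul (ne_of_gt ht.1) (ne_of_gt (hp i).1)]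
      ring
    rw [hlogsum] at hmax'
    -- integrals
    set It := ∫ x in Set.Ioo (0:ℝ) 1, ((∏ j, (1 - q j * x)) - 1) / x with hIt
    set I1 := ∫ x in Set.Ioo (0:ℝ) 1, ((∏ j, (1 - p j * x)) - 1) / x with hI1
    have hIqint := intble' n q (fun i => (hqmem i).1.le) (fun i => (hqmem i).2)
    have hIpint := intble' n p hp0 hp1
    have hdiff : It - I1
        = ∫ x in Set.Ioo (0:ℝ) 1, ((∏ j, (1 - q j * x)) - ∏ j, (1 - p j * x)) / x := by
      rw [hIt, hI1, ← integral_sub hIqint hIpint]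
      refine integral_congr_ae (Filter.Eventually.of_forall fun x => ?_)
      simp only [div_sub_div_same, sub_sub_sub_cancel_right]
    -- pointwise lower bound
    have hcontg : Continuous (fun x : ℝ =>
        (1 - t) * ∑ i, p i * ∏ j ∈ Finset.univ.erase i, (1 - p j * x)) := by
      apply Continuous.mul continuous_const
      exact continuous_finset_sum _ fun i _ =>
        Continuous.mul continuous_const (continuous_finset_prod _ fun j _ => by continuity)
    have hgint : IntegrableOn (fun x : ℝ =>
        (1 - t) * ∑ i, p i * ∏ j ∈ Finset.univ.erase i, (1 - p j * x))
        (Set.Ioo (0:ℝ) 1) volume :=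
      (hcontg.continuousOn.integrableOn_compact isCompact_Icc).mono_set Set.Ioo_subset_Icc_self
    have hFint : IntegrableOn (fun x : ℝ =>
        ((∏ j, (1 - q j * x)) - ∏ j, (1 - p j * x)) / x) (Set.Ioo (0:ℝ) 1) volume := by
      have h0 : IntegrableOn (fun x => ((∏ j, (1 - q j * x)) - 1) / x
          - ((∏ j, (1 - p j * x)) - 1) / x) (Set.Ioo (0:ℝ) 1) volume := hIqint.sub hIpint
      exact h0.congr_fun (fun x _ => by
        simp only [div_sub_div_same, sub_sub_sub_cancel_right]) measurableSet_Ioo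
    have hmono : ∫ x in Set.Ioo (0:ℝ) 1,
          (1 - t) * ∑ i, p i * ∏ j ∈ Finset.univ.erase i, (1 - p j * x)
        ≤ ∫ x in Set.Ioo (0:ℝ) 1, ((∏ j, (1 - q j * x)) - ∏ j, (1 - p j * x)) / x := by
      refine setIntegral_mono_on hgint hFint measurableSet_Ioo (fun x hx => ?_)
      have hx0 := hx.1
      have hx1 := hx.2
      rw [le_div_iff₀ hx0]
      have htele := tele_ineq' Finset.univ (fun j => 1 - q j * x) (fun j => 1 - p j * x)
        (fun j _ => by show (0:ℝ) ≤ 1 - p j * x; nlinarith [hp0 j, hp1 j])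
        (fun j _ => by
          show (1:ℝ) - p j * x ≤ 1 - t * p j * x
          nlinarith [mul_nonneg (hp0 j) hx0.le, ht.2])
        (fun j _ => by
          show (1:ℝ) - t * p j * x ≤ 1
          nlinarith [mul_nonneg (mul_nonneg ht.1.le (hp0 j)) hx0.le])
      calc ((1 - t) * ∑ i, p i * ∏ j ∈ Finset.univ.erase i, (1 - p j * x)) * x
          = ∑ i, ((1 - q i * x) - (1 - p i * x)) * ∏ j ∈ Finset.univ.erase i, (1 - p j * x) := by
            rw [Finset.mul_sum, Finset.sum_mul]
            refine Finset.sum_congr rfl fun i _ => ?_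
            show ((1 - t) * (p i * ∏ j ∈ Finset.univ.erase i, (1 - p j * x))) * x
              = ((1 - t * p i * x) - (1 - p i * x)) * ∏ j ∈ Finset.univ.erase i, (1 - p j * x)
            ring
        _ ≤ (∏ j, (1 - q j * x)) - ∏ j, (1 - p j * x) := htele
    have hgval : ∫ x in Set.Ioo (0:ℝ) 1,
          (1 - t) * ∑ i, p i * ∏ j ∈ Finset.univ.erase i, (1 - p j * x)
        = (1 - t) * (1 - P1) := by
      rw [MeasureTheory.integral_const_mul, ftc' n p]
    -- combine
    have hmain : (1 - t) * (1 - P1) ≤ S * (-Real.log t) := by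
      rw [← hgval]
      calc _ ≤ It - I1 := by rw [hdiff]; exact hmono
        _ ≤ S * (-Real.log t) := by linarith
    have hlog : -Real.log t ≤ (1 - t) / t := by
      have h1 := Real.log_le_sub_one_of_pos (inv_pos.2 ht.1)
      rw [Real.log_inv] at h1
      have heq : t⁻¹ - 1 = (1 - t) / t := by
        rw [sub_div, div_self (ne_of_gt ht.1), inv_eq_one_div]
      linarith [heq ▸ h1]
    have h2 : S * (-Real.log t) ≤ S * ((1 - t) / t) :=
      mul_le_mul_of_nonneg_left hlog hS0
    have h3 : (1 - t) * (1 - P1) ≤ S * ((1 - t) / t) := le_trans hmain h2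
    have h4 : ((1 - t) * (1 - P1)) * t ≤ (S * ((1 - t) / t)) * t :=
      mul_le_mul_of_nonneg_right h3 ht.1.le
    have h5 : S * ((1 - t) / t) * t = S * (1 - t) := by
      rw [mul_assoc, div_mul_cancel₀ _ (ne_of_gt ht.1)]
    rw [h5] at h4
    nlinarith [h4, sub_pos.2 ht.2]
  -- conclude the first part
  have first : 1 - P1 ≤ S := by
    by_contra h
    push_neg at h
    have hd : 0 < 1 - P1 := lt_of_le_of_lt hS0 h
    set t := (S / (1 - P1) + 1) / 2 with htdef
    have htlt : S / (1 - P1) < 1 := (div_lt_one hd).2 h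
    have ht0 : 0 < t := by
      have : 0 ≤ S / (1 - P1) := div_nonneg hS0 hd.le
      rw [htdef]; linarith
    have ht1 : t < 1 := by rw [htdef]; linarith
    have hk := key t ⟨ht0, ht1⟩
    have : t * (1 - P1) = (S + (1 - P1)) / 2 := by
      rw [htdef]; field_simp
    rw [this] at hk
    linarith
  refine ⟨first, fun hlt i => ?_⟩
  rcases lt_or_eq_of_le (hp1 i) with h | h
  · exact h
  · exfalso
    have : P1 = 0 := Finset.prod_eq_zero (Finset.mem_univ i) (by rw [h]; ring)
    rw [this] at first
    linarith
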